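/- arXiv:1312.5910 — 3 statements merged into one kernel-verified Lean document; each statement's English description precedes it below -/
import Mathlib

section
/- Let G be an action operad. Then the group G(1) is abelian. -/
/-- Cast an element of a dependent family along an equality of indices. -/
def castF (F : ℕ → Type) {a b : ℕ} (h : a = b) (x : F a) : F b := h ▸ x

/-- Splitting off the first summand of a sigma type over `Fin (n+1)`. -/
def sigmaFinSucc {n : ℕ} (β : Fin (n + 1) → Type) :
    (Σ i : Fin (n + 1), β i) ≃ (β 0 ⊕ Σ i : Fin n, β i.succ) where
  toFun x := Fin.cases (motive := fun j => β j → β 0 ⊕ Σ i : Fin n, β i.succ)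
    Sum.inl (fun i b => Sum.inr ⟨i, b⟩) x.1 x.2
  invFun s := Sum.elim (fun b => ⟨0, b⟩) (fun p => ⟨p.1.succ, p.2⟩) s
  left_inv x := by
    obtain ⟨i, b⟩ := x
    induction i using Fin.cases with
    | zero => rfl
    | succ i => rfl
  right_inv s := by rcases s with b | ⟨i, b⟩ <;> rfl

/-- The lexicographic identification of a disjoint union of blocks
`Fin (k 0), …, Fin (k (n-1))` (in this order) with `Fin (k 0 + ⋯ + k (n-1))`. -/
def finSigmaEquiv : ∀ {n : ℕ} (k : Fin n → ℕ), (Σ i : Fin n, Fin (k i)) ≃ Fin (∑ i, k i)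
  | 0, k => by
      haveI : IsEmpty (Fin (∑ i : Fin 0, k i)) := by
        rw [Finset.univ_eq_empty, Finset.sum_empty]; infer_instance
      exact Equiv.equivOfIsEmpty _ _
  | n + 1, k =>
      (sigmaFinSucc fun i => Fin (k i)).trans <|
        ((Equiv.sumCongr (Equiv.refl (Fin (k 0))) (finSigmaEquiv fun i => k i.succ)).trans
          (finSumFinEquiv.trans (finCongr (Fin.sum_univ_succ k).symm)))

/-- Operadic composition in the symmetric operad:
`μ(σ; τ₁, …, τₙ) = σ⁺ · (τ₁ ⊕ ⋯ ⊕ τₙ)`. -/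
def permOperadComp {n : ℕ} (k : Fin n → ℕ) (σ : Equiv.Perm (Fin n))
    (τ : ∀ i, Equiv.Perm (Fin (k i))) : Equiv.Perm (Fin (∑ i, k i)) :=
  (finSigmaEquiv k).symm.trans <|
    ((Equiv.sigmaCongr (β₂ := fun j => Fin (k (σ.symm j))) σ
        fun i => (τ i).trans (finCongr (congrArg k (σ.symm_apply_apply i).symm))).trans
      ((finSigmaEquiv fun j => k (σ.symm j)).trans (finCongr (Equiv.sum_comp σ.symm k))))

lemma sum_sigma_eq {n : ℕ} (k : Fin n → ℕ) (m : ∀ i, Fin (k i) → ℕ) :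
    (∑ s : Fin (∑ i, k i), m ((finSigmaEquiv k).symm s).1 ((finSigmaEquiv k).symm s).2)
      = ∑ i, ∑ j, m i j := by
  have h := Equiv.sum_comp (finSigmaEquiv k)
    (fun s => m ((finSigmaEquiv k).symm s).1 ((finSigmaEquiv k).symm s).2)
  rw [← h]
  have h2 : ∀ p : (i : Fin n) × Fin (k i),
      m ((finSigmaEquiv k).symm ((finSigmaEquiv k) p)).fst
          ((finSigmaEquiv k).symm ((finSigmaEquiv k) p)).snd = m p.1 p.2 := by
    intro p; rw [Equiv.symm_apply_apply]
  rw [Finset.sum_congr rfl fun p _ => h2 p, ← Finset.univ_sigma_univ, Finset.sum_sigma]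
/-- An action operad: an operad in sets whose levels are groups, with a map to the
symmetric operad that is levelwise a group homomorphism and an operad map, and
satisfying the exchange law relating group multiplication and operadic composition. -/
structure ActionOperad (G : ℕ → Type) [∀ n, Group (G n)] where
  /-- the operadic unit `id ∈ G(1)` -/
  unit : G 1
  /-- operadic composition `μ : G(n) × G(k₁) × ⋯ × G(kₙ) → G(k₁+⋯+kₙ)` -/
  comp : ∀ {n : ℕ} {k : Fin n → ℕ}, G n → (∀ i, G (k i)) → G (∑ i, k i)
  /-- the underlying-permutation group homomorphisms `πₙ : G(n) → Σₙ` -/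
  π : ∀ n : ℕ, G n →* Equiv.Perm (Fin n)
  /-- `μ(id; x) = x` -/
  unit_comp : ∀ {n : ℕ} (x : G n),
    castF G (Fin.sum_univ_one fun _ => n) (comp unit fun _ : Fin 1 => x) = x
  /-- `μ(x; id, …, id) = x` -/
  comp_unit : ∀ {n : ℕ} (x : G n),
    castF G (by simp : (∑ _i : Fin n, 1) = n) (comp x fun _ : Fin n => unit) = x
  /-- associativity of operadic composition -/
  comp_assoc : ∀ {n : ℕ} {k : Fin n → ℕ} {m : ∀ i, Fin (k i) → ℕ}
      (x : G n) (y : ∀ i, G (k i)) (z : ∀ i j, G (m i j)),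
      castF G (sum_sigma_eq k m)
        (comp (comp x y) fun s => z ((finSigmaEquiv k).symm s).1 ((finSigmaEquiv k).symm s).2)
        = comp x fun i => comp (y i) (z i)
  /-- `π` preserves the operadic unit -/
  π_unit : π 1 unit = 1
  /-- `π` is a map of operads -/
  π_comp : ∀ {n : ℕ} {k : Fin n → ℕ} (g : G n) (f : ∀ i, G (k i)),
      π _ (comp g f) = permOperadComp k (π n g) fun i => π _ (f i)
  /-- the exchange law
  `μ(g; f₁,…,fₙ)·μ(g′; f₁′,…,fₙ′) = μ(g·g′; f_{π(g′)(1)}·f₁′, …, f_{π(g′)(n)}·fₙ′)` -/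
  exchange : ∀ {n : ℕ} {k : Fin n → ℕ} (g g' : G n)
      (f : ∀ i, G (k ((π n g').symm i))) (f' : ∀ i, G (k i)),
      castF G (Equiv.sum_comp (π n g').symm k) (comp g f) * comp g' f'
        = comp (g * g') fun i =>
            castF G (congrArg k ((π n g').symm_apply_apply i)) (f (π n g' i)) * f' i

lemma castF_mul (G : ℕ → Type) [∀ n, Group (G n)] {a b : ℕ} (h : a = b) (x y : G a) :
    castF G h (x * y) = castF G h x * castF G h y := by
  subst h; rfl

/-- For an action operad `G`, the group `G(1)` is abelian. -/
theorem actionOperad_G1_comm (G : ℕ → Type) [∀ n, Group (G n)]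
    (A : ActionOperad G) (g h : G 1) : g * h = h * g := by
  set e := A.unit with he
  have p : (∑ _i : Fin 1, 1) = 1 := by simp
  set m : G 1 → G 1 → G 1 :=
    fun a b => castF G p (A.comp (k := fun _ => 1) a (fun _ : Fin 1 => b)) with hm
  have hleft : ∀ x : G 1, m e x = x := by
    intro x
    have := A.unit_comp x
    exact this
  have hright : ∀ x : G 1, m x e = x := by
    intro x
    have := A.comp_unit x
    exact this
  have hex : ∀ a a' b b' : G 1, m a b * m a' b' = m (a * a') (b * b') := by
    intro a a' b b'
    have h1 := A.exchange (n := 1) (k := fun _ => 1) a a'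
      (fun _ : Fin 1 => b) (fun _ : Fin 1 => b')
    have h2 : castF G (Equiv.sum_comp (A.π 1 a').symm (fun _ : Fin 1 => 1))
        (A.comp (k := fun _ => 1) a (fun _ : Fin 1 => b))
        = A.comp (k := fun _ => 1) a (fun _ : Fin 1 => b) := rfl
    have h3 : (fun i : Fin 1 =>
        castF G (congrArg (fun _ : Fin 1 => 1) ((A.π 1 a').symm_apply_apply i)) b * b')
        = fun _ : Fin 1 => b * b' := rfl
    rw [h2] at h1
    simp only [hm, ← castF_mul]
    rw [h1]
    rfl
  have he1 : e = 1 := by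
    have h4 := hex e 1 1 e
    simp only [hleft, hright, mul_one, one_mul] at h4
    exact h4.symm
  rw [he1] at hleft hright
  have key : ∀ x y : G 1, m x y = x * y := by
    intro x y
    calc m x y = m (x * 1) (1 * y) := by rw [mul_one, one_mul]
    _ = m x 1 * m 1 y := (hex x 1 1 y).symm
    _ = x * y := by rw [hleft, hright]
  have key2 : ∀ x y : G 1, m x y = y * x := by
    intro x y
    calc m x y = m (1 * x) (y * 1) := by rw [mul_one, one_mul]
    _ = m 1 y * m x 1 := (hex 1 x y 1).symm
    _ = y * x := by rw [hleft, hright]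
  rw [← key g h, key2 g h]
end

section
/- Let G be an action operad and P a G-operad in sets, with associated endofunctor P̲ of the category of sets. If P̲ preserves pullbacks, then for every n, every p ∈ P(n) and every g ∈ G(n), the equation p·g = p implies that πₙ(g) is the identity permutation (i.e. g ∈ ker πₙ). -/
/-- A `G`-operad for an action operad `G`: an operad `P` in sets together with a
right `G(n)`-action on each `P(n)` satisfying the two equivariance axioms. -/
structure GOperad (G : ℕ → Type) [∀ n, Group (G n)] (A : ActionOperad G) where
  /-- the underlying family of sets -/
  P : ℕ → Type
  /-- the operadic unit `id ∈ P(1)` -/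
  unit : P 1
  /-- operadic composition -/
  comp : ∀ {n : ℕ} {k : Fin n → ℕ}, P n → (∀ i, P (k i)) → P (∑ i, k i)
  /-- the right `G(n)`-action on `P(n)` -/
  act : ∀ {n : ℕ}, P n → G n → P n
  act_one : ∀ {n : ℕ} (x : P n), act x 1 = x
  act_mul : ∀ {n : ℕ} (x : P n) (g h : G n), act x (g * h) = act (act x g) h
  unit_comp : ∀ {n : ℕ} (x : P n),
    castF P (Fin.sum_univ_one fun _ => n) (comp unit fun _ : Fin 1 => x) = x
  comp_unit : ∀ {n : ℕ} (x : P n),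
    castF P (by simp : (∑ _i : Fin n, 1) = n) (comp x fun _ : Fin n => unit) = x
  comp_assoc : ∀ {n : ℕ} {k : Fin n → ℕ} {m : ∀ i, Fin (k i) → ℕ}
      (x : P n) (y : ∀ i, P (k i)) (z : ∀ i j, P (m i j)),
      castF P (sum_sigma_eq k m)
        (comp (comp x y) fun s => z ((finSigmaEquiv k).symm s).1 ((finSigmaEquiv k).symm s).2)
        = comp x fun i => comp (y i) (z i)
  /-- `μ(x; y₁·g₁, …, yₙ·gₙ) = μ(x; y₁, …, yₙ)·μ(e; g₁, …, gₙ)` -/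
  equiv_inner : ∀ {n : ℕ} {k : Fin n → ℕ} (x : P n) (y : ∀ i, P (k i))
      (g : ∀ i, G (k i)),
      comp x (fun i => act (y i) (g i)) = act (comp x y) (A.comp (1 : G n) g)
  /-- `μ(x·g; y₁, …, yₙ) = μ(x; y_{π(g)⁻¹(1)}, …, y_{π(g)⁻¹(n)})·μ(g; e, …, e)` -/
  equiv_outer : ∀ {n : ℕ} {k : Fin n → ℕ} (x : P n) (g : G n) (y : ∀ i, P (k i)),
      comp (act x g) y
        = castF P (Equiv.sum_comp (A.π n g).symm k)
            (act (comp x fun i => y ((A.π n g).symm i))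
              (A.comp g fun i => (1 : G (k ((A.π n g).symm i)))))

open CategoryTheory

variable {G : ℕ → Type} [∀ n, Group (G n)] {A : ActionOperad G}

/-- The relation `(p·g; x₁,…,xₙ) ∼ (p; x_{π(g)⁻¹(1)},…,x_{π(g)⁻¹(n)})` defining the
quotient `P(n) ×_{G(n)} Xⁿ`. -/
def PRel (P : GOperad G A) (n : ℕ) (X : Type) :
    P.P n × (Fin n → X) → P.P n × (Fin n → X) → Prop :=
  fun a b => ∃ g : G n, a.1 = P.act b.1 g ∧ ∀ i, b.2 i = a.2 ((A.π n g).symm i)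

/-- The value `P̲(X) = ∐ₙ P(n) ×_{G(n)} Xⁿ` of the endofunctor associated to a
`G`-operad `P`. -/
def PApply (P : GOperad G A) (X : Type) : Type :=
  Σ n : ℕ, Quot (PRel P n X)

/-- The endofunctor `P̲` of the category of sets associated to a `G`-operad `P`. -/
def PEndofunctor (P : GOperad G A) : Type ⥤ Type where
  obj X := PApply P X
  map {X Y} f := TypeCat.ofHom fun z =>
    ⟨z.1, Quot.lift (fun a => Quot.mk _ (a.1, fun i => f (a.2 i)))
      (by
        rintro a b ⟨g, h1, h2⟩
        exact Quot.sound ⟨g, h1, fun i => by show f (b.2 i) = f (a.2 _); rw [h2 i]⟩) z.2⟩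
  map_id X := by
    ext z
    obtain ⟨n, q⟩ := z
    induction q using Quot.ind with
    | _ a => rfl
  map_comp {X Y Z} f g := by
    ext z
    obtain ⟨n, q⟩ := z
    induction q using Quot.ind with
    | _ a => rfl

/-- If the endofunctor `P̲` associated to a `G`-operad `P`
preserves pullbacks, then whenever `p·g = p` in `P(n)` the underlying permutation
`πₙ(g)` is the identity, i.e. `g ∈ ker πₙ`. -/
theorem pEndofunctor_preservesPullbacks_to_free (G : ℕ → Type) [∀ n, Group (G n)]
    (A : ActionOperad G) (P : GOperad G A)
    (hpb : Nonempty (Limits.PreservesLimitsOfShape Limits.WalkingCospan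
      (PEndofunctor P))) :
    ∀ (n : ℕ) (p : P.P n) (g : G n), P.act p g = p → A.π n g = 1 := by
  obtain ⟨hpb⟩ := hpb
  haveI := hpb
  intro n p g hp
  have hinv : P.act p g⁻¹ = p := by
    have h := congrArg (fun x => P.act x g⁻¹) hp
    simpa [← P.act_mul, P.act_one] using h.symm
  set σ := A.π n g with hσ
  let X := Fin n
  let f : X ⟶ (PUnit : Type) := TypeCat.ofHom fun _ => PUnit.unit
  let c : Limits.PullbackCone f f :=
    Limits.PullbackCone.mk (TypeCat.ofHom Prod.fst : X × X ⟶ X) (TypeCat.ofHom Prod.snd : X × X ⟶ X) rfl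
  have hc : Limits.IsLimit c := by
    refine Limits.PullbackCone.IsLimit.mk (f := f) (g := f)
      (fst := (TypeCat.ofHom Prod.fst : X × X ⟶ X)) (snd := (TypeCat.ofHom Prod.snd : X × X ⟶ X)) rfl
      (fun s => TypeCat.ofHom fun x => (s.fst x, s.snd x)) (fun s => rfl) (fun s => rfl) ?_
    intro s m h1 h2
    ext x
    · have e := ConcreteCategory.congr_hom h1 x
      exact congrArg Fin.val e
    · have e := ConcreteCategory.congr_hom h2 x
      exact congrArg Fin.val e
  have hl := Limits.isLimitOfPreserves (PEndofunctor P) hc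
  let w0 : (PEndofunctor P).obj (X × X) :=
    ⟨n, Quot.mk _ (p, fun i => (i, i))⟩
  let w1 : (PEndofunctor P).obj (X × X) :=
    ⟨n, Quot.mk _ (p, fun i => (i, σ i))⟩
  have hfst : (PEndofunctor P).map (TypeCat.ofHom Prod.fst : X × X ⟶ X) w0
      = (PEndofunctor P).map (TypeCat.ofHom Prod.fst : X × X ⟶ X) w1 := rfl
  have hsnd : (PEndofunctor P).map (TypeCat.ofHom Prod.snd : X × X ⟶ X) w0
      = (PEndofunctor P).map (TypeCat.ofHom Prod.snd : X × X ⟶ X) w1 := by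
    show (⟨n, Quot.mk _ ((p, fun i => i) : P.P n × (Fin n → X))⟩ : PApply P X)
      = ⟨n, Quot.mk _ (p, fun i => σ i)⟩
    congr 1
    apply Quot.sound
    refine ⟨g⁻¹, hinv.symm, fun i => ?_⟩
    show σ i = (A.π n g⁻¹).symm i
    simp [map_inv, hσ, Equiv.Perm.inv_def]
  have hw : w0 = w1 := by
    apply (Limits.Types.isLimitEquivSections hl).injective
    apply Subtype.ext
    funext j
    show ((PEndofunctor P).mapCone c).π.app j w0 = ((PEndofunctor P).mapCone c).π.app j w1
    rcases j with _ | (_ | _)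
    · show (PEndofunctor P).map (c.π.app Limits.WalkingCospan.one) w0
        = (PEndofunctor P).map (c.π.app Limits.WalkingCospan.one) w1
      have : c.π.app Limits.WalkingCospan.one = (TypeCat.ofHom Prod.fst : X × X ⟶ X) ≫ f := rfl
      rw [this]
      exact congrArg ((PEndofunctor P).map f) hfst
    · exact hfst
    · exact hsnd
  have hq : (Quot.mk (PRel P n (X × X)) (p, fun i => (i, i)))
      = Quot.mk (PRel P n (X × X)) (p, fun i => (i, σ i)) :=
    eq_of_heq (Sigma.ext_iff.mp hw).2
  have hequiv : Equivalence (PRel P n (X × X)) := by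
    constructor
    · intro a
      exact ⟨1, by rw [P.act_one], fun i => by simp; rfl⟩
    · rintro a b ⟨h, h1, h2⟩
      refine ⟨h⁻¹, ?_, fun i => ?_⟩
      · rw [h1, ← P.act_mul, mul_inv_cancel, P.act_one]
      · rw [h2]
        simp [map_inv, Equiv.Perm.inv_def]
    · rintro a b cc ⟨h, h1, h2⟩ ⟨h', h1', h2'⟩
      refine ⟨h' * h, ?_, fun i => ?_⟩
      · rw [h1, h1', ← P.act_mul]
      · rw [h2', h2]
        simp only [map_mul]
        rfl
  obtain ⟨h, h1, h2⟩ := hequiv.eqvGen_iff.mp (Quot.eqvGen_exact hq)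
  have hfix : ∀ i : Fin n, (A.π n h).symm i = i := by
    intro i
    exact (congrArg Prod.fst (h2 i)).symm
  ext i
  have := congrArg Prod.snd (h2 i)
  simp only [] at this
  rw [this, hfix i]
  rfl
end

section
/- For all positive integers l, m and n₁,…,n_m, putting N = n₁ + ⋯ + n_m, the following identity holds in the symmetric group Σ_{Nl}: μ(τ_{m,l}; e_{n₁},…,e_{n₁},…,e_{n_m},…,e_{n_m}) · μ(e_m; τ_{n₁,l},…,τ_{n_m,l}) = τ_{N,l}, where in the first factor each identity permutation e_{nᵢ} is repeated l times (in the order e_{n₁} l times, then e_{n₂} l times, and so on), e_k denotes the identity of Σ_k, and μ denotes operadic composition in the symmetric operad. -/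
lemma mul_add_lt_mul {p m q n : ℕ} (hp : p < m) (hq : q < n) : p * n + q < m * n :=
  calc p * n + q < p * n + n := by omega
    _ = (p + 1) * n := by ring
    _ ≤ m * n := Nat.mul_le_mul_right n hp

/-- Transport of a permutation along an equality of natural numbers. -/
def permCast {a b : ℕ} (h : a = b) (σ : Equiv.Perm (Fin a)) : Equiv.Perm (Fin b) :=
  ((finCongr h).symm.trans σ).trans (finCongr h)

/-- `t` is the transpose permutation `τ_{m,n} ∈ Σ_{mn}` determined (in 1-indexed
notation) by `τ_{m,n}((p−1)n + q) = (q−1)m + p` for `1 ≤ p ≤ m`, `1 ≤ q ≤ n`. -/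
def IsTransposePerm (m n : ℕ) (t : Equiv.Perm (Fin (m * n))) : Prop :=
  ∀ (p : Fin m) (q : Fin n),
    t ⟨p.val * n + q.val, mul_add_lt_mul p.isLt q.isLt⟩
      = ⟨q.val * m + p.val, Nat.mul_comm n m ▸ mul_add_lt_mul q.isLt p.isLt⟩

lemma sum_div_eq (m l : ℕ) (hl : 0 < l) (nn : Fin m → ℕ) :
    ∑ s : Fin (m * l), nn ⟨s.val / l, (Nat.div_lt_iff_lt_mul hl).mpr s.isLt⟩
      = (∑ i, nn i) * l := by
  have h := Equiv.sum_comp (finProdFinEquiv (m := m) (n := l))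
    (fun s : Fin (m * l) => nn ⟨s.val / l, (Nat.div_lt_iff_lt_mul hl).mpr s.isLt⟩)
  rw [← h]
  have h2 : ∀ p : Fin m × Fin l,
      nn ⟨((finProdFinEquiv p : Fin (m * l)) : ℕ) / l,
        (Nat.div_lt_iff_lt_mul hl).mpr (finProdFinEquiv p).isLt⟩ = nn p.1 := by
    intro p
    congr 1
    ext
    show (p.2.val + l * p.1.val) / l = p.1.val
    rw [Nat.add_mul_div_left _ _ hl, Nat.div_eq_of_lt p.2.isLt, Nat.zero_add]
  calc ∑ p : Fin m × Fin l, _ = ∑ p : Fin m × Fin l, nn p.1 :=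
        Finset.sum_congr rfl fun p _ => h2 p
    _ = (∑ i, nn i) * l := by
        rw [Fintype.sum_prod_type]
        simp only [Finset.sum_const, Finset.card_univ, Fintype.card_fin, smul_eq_mul]
        rw [← Finset.mul_sum, mul_comm]


def psum {n : ℕ} (k : Fin n → ℕ) (c : ℕ) : ℕ := ∑ t : Fin n, if t.val < c then k t else 0

lemma psum_zero {n : ℕ} (k : Fin n → ℕ) : psum k 0 = 0 := by simp [psum]

lemma psum_succ {n : ℕ} (k : Fin (n+1) → ℕ) (c : ℕ) :
    psum k (c+1) = k 0 + psum (fun t : Fin n => k t.succ) c := by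
  simp [psum, Fin.sum_univ_succ, Nat.succ_lt_succ_iff]

lemma psum_mul {n : ℕ} (k : Fin n → ℕ) (l c : ℕ) :
    psum (fun t => k t * l) c = psum k c * l := by
  simp [psum, Finset.sum_mul, ite_mul]

lemma sum_ite_lt (l T c : ℕ) :
    (∑ b : Fin l, if b.val < T then c else 0) = min T l * c := by
  rw [Fin.sum_univ_eq_sum_range (fun b => if b < T then c else 0) l]
  induction l with
  | zero => simp
  | succ l ih =>
      rw [Finset.sum_range_succ, ih]
      rcases lt_or_ge l T with h | h
      · rw [if_pos h, show min T (l+1) = min T l + 1 by omega]; ring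
      · rw [if_neg (by omega), show min T (l+1) = min T l by omega, add_zero]

lemma sum_ite_eq_fin {n : ℕ} (i : Fin n) (f : Fin n → ℕ) :
    (∑ a : Fin n, if a.val = i.val then f a else 0) = f i := by
  have : ∀ a : Fin n, (if a.val = i.val then f a else 0) = (if a = i then f a else 0) := by
    intro a; simp [Fin.val_eq_val]
  rw [Finset.sum_congr rfl fun a _ => this a, Finset.sum_ite_eq' Finset.univ i f]
  simp

lemma finSigmaEquiv_apply_val : ∀ {n : ℕ} (k : Fin n → ℕ) (p : Σ i : Fin n, Fin (k i)),
    ((finSigmaEquiv k p : Fin (∑ i, k i)) : ℕ) = psum k p.1.val + p.2.val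
  | 0, k, p => p.1.elim0
  | n + 1, k, ⟨i, b⟩ => by
      induction i using Fin.cases with
      | zero =>
          simp [finSigmaEquiv, sigmaFinSucc, psum_zero]
      | succ i =>
          have ih : (((finSigmaEquiv fun t : Fin n => k t.succ) ⟨i, b⟩ : Fin _) : ℕ)
              = psum (fun t : Fin n => k t.succ) i.val + b.val :=
            by exact finSigmaEquiv_apply_val (fun t : Fin n => k t.succ) ⟨i, b⟩
          simp only [finSigmaEquiv, sigmaFinSucc, Equiv.trans_apply, Equiv.coe_fn_mk,
            Fin.cases_succ, Equiv.sumCongr_apply, Sum.map_inr, finSumFinEquiv_apply_right,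
            finCongr_apply, Fin.coe_cast, Fin.coe_natAdd, Fin.val_succ]
          rw [psum_succ]
          omega

lemma finSigmaEquiv_symm_eq {n : ℕ} (k : Fin n → ℕ) (i : Fin n) (b : Fin (k i))
    (x : Fin (∑ i, k i)) (hx : (x : ℕ) = psum k i.val + b.val) :
    (finSigmaEquiv k).symm x = ⟨i, b⟩ := by
  rw [Equiv.symm_apply_eq]
  exact Fin.ext (by rw [hx, finSigmaEquiv_apply_val])

lemma sigmaCongr_apply_mk {α₁ α₂ : Type} {β₁ : α₁ → Type} {β₂ : α₂ → Type}
    (f : α₁ ≃ α₂) (F : ∀ a, β₁ a ≃ β₂ (f a)) (a : α₁) (b : β₁ a) :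
    Equiv.sigmaCongr f F ⟨a, b⟩ = ⟨f a, F a b⟩ := rfl

lemma permOperadComp_apply_val {n : ℕ} (k : Fin n → ℕ) (σ : Equiv.Perm (Fin n))
    (τ : ∀ i, Equiv.Perm (Fin (k i))) (i : Fin n) (b : Fin (k i)) (x : Fin (∑ i, k i))
    (hx : (x : ℕ) = psum k i.val + b.val) :
    ((permOperadComp k σ τ x : Fin (∑ i, k i)) : ℕ)
      = psum (fun j => k (σ.symm j)) (σ i).val + ((τ i) b : ℕ) := by
  have hsymm : (finSigmaEquiv k).symm x = ⟨i, b⟩ := finSigmaEquiv_symm_eq k i b x hx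
  simp only [permOperadComp, Equiv.trans_apply, hsymm, sigmaCongr_apply_mk,
    finCongr_apply, Fin.coe_cast]
  rw [finSigmaEquiv_apply_val]
  simp

lemma permCast_apply_val {a b : ℕ} (h : a = b) (σ : Equiv.Perm (Fin a)) (x : Fin b)
    (y : Fin a) (hy : (y : ℕ) = (x : ℕ)) :
    ((permCast h σ x : Fin b) : ℕ) = (σ y : ℕ) := by
  have hy' : (finCongr h).symm x = y := by
    apply Fin.ext; simp [hy]
  show ((finCongr h (σ ((finCongr h).symm x)) : Fin b) : ℕ) = _
  rw [hy']; simp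


lemma div_lemma {l b a : ℕ} (hl : 0 < l) (hb : b < l) : (b + l * a) / l = a := by
  rw [Nat.add_mul_div_left _ _ hl, Nat.div_eq_of_lt hb, Nat.zero_add]

lemma psum_rep (m l : ℕ) (hl : 0 < l) (nn : Fin m → ℕ) (i : Fin m) (q : ℕ) (hq : q < l) :
    psum (fun s : Fin (m * l) => nn ⟨s.val / l, (Nat.div_lt_iff_lt_mul hl).mpr s.isLt⟩)
        (i.val * l + q)
      = psum nn i.val * l + q * nn i := by
  unfold psum
  rw [← Equiv.sum_comp (finProdFinEquiv (m := m) (n := l))]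
  have key : ∀ p : Fin m × Fin l,
      (fun s : Fin (m * l) =>
          if s.val < i.val * l + q then nn ⟨s.val / l, (Nat.div_lt_iff_lt_mul hl).mpr s.isLt⟩
          else 0) (finProdFinEquiv p)
        = (if p.2.val + l * p.1.val < i.val * l + q then nn p.1 else 0) := by
    rintro ⟨a, b⟩
    have hv : ((finProdFinEquiv (a, b) : Fin (m * l)) : ℕ) = b.val + l * a.val := rfl
    simp only [hv]
    by_cases hc : b.val + l * a.val < i.val * l + q
    · rw [if_pos hc, if_pos hc]
      congr 1
      exact Fin.ext (div_lemma hl b.isLt)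
    · rw [if_neg hc, if_neg hc]
  rw [Finset.sum_congr rfl fun p _ => key p, Fintype.sum_prod_type]
  have inner : ∀ a : Fin m,
      (∑ b : Fin l, if b.val + l * a.val < i.val * l + q then nn a else 0)
        = (if a.val < i.val then nn a * l else 0) + (if a.val = i.val then q * nn a else 0) := by
    intro a
    rcases Nat.lt_trichotomy a.val i.val with h | h | h
    · rw [if_pos h, if_neg (by omega), add_zero]
      have hall : ∀ b : Fin l, b.val + l * a.val < i.val * l + q := by
        intro b
        have h1 : l * (a.val + 1) ≤ l * i.val := Nat.mul_le_mul_left l h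
        have h2 : l * (a.val + 1) = l * a.val + l := by ring
        have h3 : l * i.val = i.val * l := Nat.mul_comm l i.val
        have hb := b.isLt
        omega
      rw [Finset.sum_congr rfl fun b _ => if_pos (hall b)]
      simp [Finset.sum_const, mul_comm]
    · rw [if_neg (by omega), if_pos h, zero_add]
      have hcond : ∀ b : Fin l,
          (if b.val + l * a.val < i.val * l + q then nn a else 0)
            = (if b.val < q then nn a else 0) := by
        intro b
        have h3 : i.val * l = l * a.val := by rw [← h, Nat.mul_comm]
        have hiff : (b.val + l * a.val < i.val * l + q) ↔ (b.val < q) := by rw [h3]; omega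
        simp only [hiff]
      rw [Finset.sum_congr rfl fun b _ => hcond b, sum_ite_lt]
      rw [Nat.min_eq_left (le_of_lt hq)]
    · rw [if_neg (by omega), if_neg (by omega), add_zero]
      have hall : ∀ b : Fin l, ¬ (b.val + l * a.val < i.val * l + q) := by
        intro b
        have h1 : l * (i.val + 1) ≤ l * a.val := Nat.mul_le_mul_left l h
        have h2 : l * (i.val + 1) = l * i.val + l := by ring
        have h3 : l * i.val = i.val * l := Nat.mul_comm l i.val
        omega
      rw [Finset.sum_congr rfl fun b _ => if_neg (hall b)]
      simp
  rw [Finset.sum_congr rfl fun a _ => inner a, Finset.sum_add_distrib]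
  have e1 : (∑ a : Fin m, if a.val < i.val then nn a * l else 0) = psum nn i.val * l := by
    rw [← psum_mul]; rfl
  rw [e1, sum_ite_eq_fin i (fun a => q * nn a)]
  rfl


lemma psum_transpose (m l : ℕ) (hl : 0 < l) (nn : Fin m → ℕ)
    (tml : Equiv.Perm (Fin (m * l))) (h1 : IsTransposePerm m l tml)
    (i : Fin m) (q : ℕ) (hq : q < l) :
    psum (fun j : Fin (m * l) =>
        nn ⟨(tml.symm j).val / l, (Nat.div_lt_iff_lt_mul hl).mpr (tml.symm j).isLt⟩)
        (q * m + i.val)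
      = q * (∑ t, nn t) + psum nn i.val := by
  unfold psum
  rw [← Equiv.sum_comp (finProdFinEquiv.trans (finCongr (Nat.mul_comm l m)))]
  have key : ∀ p : Fin l × Fin m,
      (fun j : Fin (m * l) =>
          if j.val < q * m + i.val then
            nn ⟨(tml.symm j).val / l, (Nat.div_lt_iff_lt_mul hl).mpr (tml.symm j).isLt⟩
          else 0) ((finProdFinEquiv.trans (finCongr (Nat.mul_comm l m))) p)
        = (if p.2.val + m * p.1.val < q * m + i.val then nn p.2 else 0) := by
    rintro ⟨q', i'⟩
    have hv : (((finProdFinEquiv.trans (finCongr (Nat.mul_comm l m))) (q', i') : Fin (m * l)) : ℕ)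
        = i'.val + m * q'.val := rfl
    have hsym : tml.symm ((finProdFinEquiv.trans (finCongr (Nat.mul_comm l m))) (q', i'))
        = ⟨i'.val * l + q'.val, mul_add_lt_mul i'.isLt q'.isLt⟩ := by
      rw [Equiv.symm_apply_eq, h1 i' q']
      exact Fin.ext (by show i'.val + m * q'.val = q'.val * m + i'.val; ring)
    have hd : (i'.val * l + q'.val) / l = i'.val := by
      rw [show i'.val * l + q'.val = q'.val + l * i'.val by ring]
      exact div_lemma hl q'.isLt
    simp only [hsym, hv]
    by_cases hc : i'.val + m * q'.val < q * m + i.val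
    · rw [if_pos hc, if_pos hc]
      congr 1
      exact Fin.ext hd
    · rw [if_neg hc, if_neg hc]
  rw [Finset.sum_congr rfl fun p _ => key p, Fintype.sum_prod_type]
  have inner : ∀ q' : Fin l,
      (∑ i' : Fin m, if i'.val + m * q'.val < q * m + i.val then nn i' else 0)
        = (if q'.val < q then (∑ t, nn t) else 0)
            + (if q'.val = q then psum nn i.val else 0) := by
    intro q'
    rcases Nat.lt_trichotomy q'.val q with h | h | h
    · rw [if_pos h, if_neg (by omega), add_zero]
      have hall : ∀ i' : Fin m, i'.val + m * q'.val < q * m + i.val := by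
        intro i'
        have h1' : m * (q'.val + 1) ≤ m * q := Nat.mul_le_mul_left m h
        have h2 : m * (q'.val + 1) = m * q'.val + m := by ring
        have h3 : m * q = q * m := Nat.mul_comm m q
        have := i'.isLt
        omega
      rw [Finset.sum_congr rfl fun i' _ => if_pos (hall i')]
    · rw [if_neg (by omega), if_pos h, zero_add]
      have hiff : ∀ i' : Fin m,
          (i'.val + m * q'.val < q * m + i.val) ↔ (i'.val < i.val) := by
        intro i'
        have h3 : m * q'.val = q * m := by rw [h, Nat.mul_comm]
        omega
      simp only [hiff]
      rfl
    · rw [if_neg (by omega), if_neg (by omega), add_zero]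
      have hall : ∀ i' : Fin m, ¬ (i'.val + m * q'.val < q * m + i.val) := by
        intro i'
        have h1' : m * (q + 1) ≤ m * q'.val := Nat.mul_le_mul_left m h
        have h2 : m * (q + 1) = m * q + m := by ring
        have h3 : m * q = q * m := Nat.mul_comm m q
        have := i.isLt
        omega
      rw [Finset.sum_congr rfl fun i' _ => if_neg (hall i')]
      simp
  rw [Finset.sum_congr rfl fun q' _ => inner q', Finset.sum_add_distrib, sum_ite_lt,
    Nat.min_eq_left (le_of_lt hq),
    show (∑ q' : Fin l, if q'.val = q then psum nn i.val else 0) = psum nn i.val from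
      sum_ite_eq_fin ⟨q, hq⟩ fun _ => psum nn i.val]
  rfl


lemma psum_succ_le {n : ℕ} (k : Fin n → ℕ) (i : Fin n) :
    psum k i.val + k i ≤ ∑ t, k t := by
  have h1 : psum k i.val + k i
      = (∑ t : Fin n, if t.val < i.val then k t else 0)
        + ∑ t : Fin n, if t.val = i.val then k t else 0 := by
    rw [sum_ite_eq_fin i k]; rfl
  rw [h1, ← Finset.sum_add_distrib]
  apply Finset.sum_le_sum
  intro t _
  split_ifs <;> omega

/-- For positive `l, m, n₁, …, n_m` with `N = n₁ + ⋯ + n_m`, in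
`Σ_{Nl}` one has `μ(τ_{m,l}; e_{n₁},…,e_{n₁},…,e_{n_m},…,e_{n_m}) ·
μ(e_m; τ_{n₁,l},…,τ_{n_m,l}) = τ_{N,l}`, where each `e_{nᵢ}` is repeated `l`
consecutive times. -/
theorem transpose_comp_identity_right (l m : ℕ) (hl : 0 < l) (hm : 0 < m)
    (nn : Fin m → ℕ) (hn : ∀ i, 0 < nn i)
    (tml : Equiv.Perm (Fin (m * l))) (tnl : ∀ i, Equiv.Perm (Fin (nn i * l)))
    (tNl : Equiv.Perm (Fin ((∑ i, nn i) * l)))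
    (h1 : IsTransposePerm m l tml)
    (h2 : ∀ i, IsTransposePerm (nn i) l (tnl i))
    (h3 : IsTransposePerm (∑ i, nn i) l tNl) :
    permCast (sum_div_eq m l hl nn)
        (permOperadComp
          (fun s : Fin (m * l) => nn ⟨s.val / l, (Nat.div_lt_iff_lt_mul hl).mpr s.isLt⟩)
          tml fun _ => 1) *
      permCast (show (∑ i, nn i * l) = (∑ i, nn i) * l from (Finset.sum_mul ..).symm)
        (permOperadComp (fun i => nn i * l) (1 : Equiv.Perm (Fin m)) tnl)
      = tNl := by
  apply Equiv.ext
  intro x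
  apply Fin.val_injective
  have hql : x.val % l < l := Nat.mod_lt _ hl
  have hpN : x.val / l < ∑ t, nn t := (Nat.div_lt_iff_lt_mul hl).mpr x.isLt
  obtain ⟨⟨i, p'⟩, hy⟩ : ∃ z : Σ t : Fin m, Fin (nn t),
      (finSigmaEquiv nn).symm ⟨x.val / l, hpN⟩ = z := ⟨_, rfl⟩
  have hip : psum nn i.val + p'.val = x.val / l := by
    have h := congrArg (fun z => ((finSigmaEquiv nn) z : ℕ)) hy
    simp only [Equiv.apply_symm_apply, finSigmaEquiv_apply_val] at h
    exact h.symm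
  have hRval : ((tNl x : Fin ((∑ t, nn t) * l)) : ℕ)
      = (x.val % l) * (∑ t, nn t) + x.val / l := by
    have hx' : x = ⟨(x.val / l) * l + x.val % l, mul_add_lt_mul hpN hql⟩ := by
      apply Fin.ext
      have h4 := Nat.div_add_mod x.val l
      have h6 : l * (x.val / l) = (x.val / l) * l := Nat.mul_comm _ _
      show x.val = (x.val / l) * l + x.val % l
      omega
    conv_lhs => rw [hx']
    exact congrArg Fin.val (h3 ⟨x.val / l, hpN⟩ ⟨x.val % l, hql⟩)
  rw [Equiv.Perm.mul_apply, hRval]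
  have eB : ((permCast (show (∑ i, nn i * l) = (∑ i, nn i) * l from (Finset.sum_mul ..).symm)
        (permOperadComp (fun i => nn i * l) (1 : Equiv.Perm (Fin m)) tnl) x
          : Fin ((∑ t, nn t) * l)) : ℕ)
      = psum nn i.val * l + ((x.val % l) * nn i + p'.val) := by
    refine (permCast_apply_val (show (∑ i, nn i * l) = (∑ i, nn i) * l from
      (Finset.sum_mul ..).symm)
      (permOperadComp (fun i => nn i * l) (1 : Equiv.Perm (Fin m)) tnl)
      x ⟨x.val, ?_⟩ rfl).trans ?_
    · rw [← Finset.sum_mul]; exact x.isLt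
    · refine (permOperadComp_apply_val _ _ _ i
        ⟨p'.val * l + x.val % l, mul_add_lt_mul p'.isLt hql⟩ _ ?_).trans ?_
      · show x.val = psum (fun t => nn t * l) i.val + (p'.val * l + x.val % l)
        rw [psum_mul]
        have h4 := Nat.div_add_mod x.val l
        have h5 : (psum nn i.val + p'.val) * l = psum nn i.val * l + p'.val * l := by ring
        have h6 : l * (x.val / l) = (x.val / l) * l := Nat.mul_comm _ _
        have h7 : (x.val / l) * l = (psum nn i.val + p'.val) * l := by rw [hip]
        omega
      · have h8 : ((tnl i ⟨p'.val * l + x.val % l, mul_add_lt_mul p'.isLt hql⟩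
            : Fin (nn i * l)) : ℕ) = (x.val % l) * nn i + p'.val := by
          exact congrArg Fin.val (h2 i p' ⟨x.val % l, hql⟩)
        rw [h8]
        show psum (fun t => nn t * l) i.val + ((x.val % l) * nn i + p'.val)
            = psum nn i.val * l + ((x.val % l) * nn i + p'.val)
        rw [psum_mul]
  refine (permCast_apply_val _ _ _
      ⟨psum nn i.val * l + ((x.val % l) * nn i + p'.val), ?_⟩ eB.symm).trans ?_
  · rw [sum_div_eq m l hl nn]
    have h1' : psum nn i.val + nn i ≤ ∑ t, nn t := psum_succ_le nn i
    have h2' : (x.val % l + 1) * nn i ≤ l * nn i :=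
      Nat.mul_le_mul_right _ (by omega)
    have h4 : (x.val % l + 1) * nn i = (x.val % l) * nn i + nn i := by ring
    have h3' : (psum nn i.val + nn i) * l ≤ (∑ t, nn t) * l := Nat.mul_le_mul_right l h1'
    have h5 : (psum nn i.val + nn i) * l = psum nn i.val * l + nn i * l := by ring
    have h6 : l * nn i = nn i * l := Nat.mul_comm _ _
    have h7 := p'.isLt
    omega
  · have hdiv : (i.val * l + x.val % l) / l = i.val := by
      rw [show i.val * l + x.val % l = x.val % l + l * i.val by ring]
      exact div_lemma hl hql
    have h9 : ∀ j : Fin m, j = i → p'.val < nn j := fun j hj => hj ▸ p'.isLt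
    refine (permOperadComp_apply_val _ tml _
        ⟨i.val * l + x.val % l, mul_add_lt_mul i.isLt hql⟩
        ⟨p'.val, h9 _ (Fin.ext (show (i.val * l + x.val % l) / l = i.val from hdiv))⟩
        _ ?_).trans ?_
    · show psum nn i.val * l + ((x.val % l) * nn i + p'.val)
        = psum (fun s : Fin (m * l) =>
            nn ⟨s.val / l, (Nat.div_lt_iff_lt_mul hl).mpr s.isLt⟩)
            (i.val * l + x.val % l) + p'.val
      rw [psum_rep m l hl nn i (x.val % l) hql]
      omega
    · have hts : ((tml ⟨i.val * l + x.val % l, mul_add_lt_mul i.isLt hql⟩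
          : Fin (m * l)) : ℕ) = (x.val % l) * m + i.val := by
        exact congrArg Fin.val (h1 i ⟨x.val % l, hql⟩)
      rw [hts, psum_transpose m l hl nn tml h1 i (x.val % l) hql]
      show (x.val % l) * (∑ t, nn t) + psum nn i.val + p'.val
          = (x.val % l) * (∑ t, nn t) + x.val / l
      omega
end
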